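/- Let A be a weak bialgebra over a field K. The bilinear form A^R × A^L → K given by (y^R, x^L) ↦ ε(y^R x^L) is nondegenerate: if x^L ∈ A^L satisfies ε(y x^L) = 0 for all y ∈ A^R then x^L = 0, and if y^R ∈ A^R satisfies ε(y^R x) = 0 for all x ∈ A^L then y^R = 0. Consequently A^L and A^R are isomorphic as K-vector spaces (they have equal finite dimension). -/
import Mathlib


open TensorProduct

noncomputable section

variable (K : Type*) [Field K] (A : Type*) [Ring A] [Algebra K A]

/-- `Π^L(x) = Σ ε(1₍₁₎ x) 1₍₂₎`. -/
def piL (Δ : A →ₗ[K] A ⊗[K] A) (ε : A →ₗ[K] K) : A →ₗ[K] A :=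
  (TensorProduct.lid K A).toLinearMap ∘ₗ ε.rTensor A ∘ₗ
    LinearMap.mulLeft K (Δ 1) ∘ₗ (TensorProduct.mk K A A).flip 1

/-- `Π^R(x) = Σ 1₍₁₎ ε(x 1₍₂₎)`. -/
def piR (Δ : A →ₗ[K] A ⊗[K] A) (ε : A →ₗ[K] K) : A →ₗ[K] A :=
  (TensorProduct.rid K A).toLinearMap ∘ₗ ε.lTensor A ∘ₗ
    LinearMap.mulRight K (Δ 1) ∘ₗ TensorProduct.mk K A A 1

/-- A weak bialgebra structure on the `K`-algebra `A`, with comultiplication `Δ`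
and counit `ε`. -/
structure WeakBialgebra (Δ : A →ₗ[K] A ⊗[K] A) (ε : A →ₗ[K] K) : Prop where
  coassoc : ∀ x : A,
    (TensorProduct.assoc K A A A) (Δ.rTensor A (Δ x)) = Δ.lTensor A (Δ x)
  counit_left : ∀ x : A, (TensorProduct.lid K A) (ε.rTensor A (Δ x)) = x
  counit_right : ∀ x : A, (TensorProduct.rid K A) (ε.lTensor A (Δ x)) = x
  comul_mul : ∀ x y : A, Δ (x * y) = Δ x * Δ y
  weak_counit_a : ∀ x y z : A,
    ε (x * y * z) =
      LinearMap.mul' K K (TensorProduct.map (ε ∘ₗ LinearMap.mulLeft K x)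
        (ε ∘ₗ LinearMap.mulRight K z) (Δ y))
  weak_counit_b : ∀ x y z : A,
    ε (x * y * z) =
      LinearMap.mul' K K (TensorProduct.map (ε ∘ₗ LinearMap.mulRight K z)
        (ε ∘ₗ LinearMap.mulLeft K x) (Δ y))
  weak_comul_unit_a :
    Δ.rTensor A (Δ 1) =
      (Δ 1 ⊗ₜ[K] (1 : A)) * ((TensorProduct.assoc K A A A).symm ((1 : A) ⊗ₜ[K] Δ 1))
  weak_comul_unit_b :
    Δ.rTensor A (Δ 1) =
      ((TensorProduct.assoc K A A A).symm ((1 : A) ⊗ₜ[K] Δ 1)) * (Δ 1 ⊗ₜ[K] (1 : A))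

/-- A weak Hopf algebra structure: a weak bialgebra together with an antipode `S`. -/
structure WeakHopfAlgebra (Δ : A →ₗ[K] A ⊗[K] A) (ε : A →ₗ[K] K) (S : A →ₗ[K] A) : Prop where
  toWeakBialgebra : WeakBialgebra K A Δ ε
  antipode_a : ∀ x : A,
    LinearMap.mul' K A (LinearMap.lTensor A S (Δ x)) = piL K A Δ ε x
  antipode_b : ∀ x : A,
    LinearMap.mul' K A (LinearMap.rTensor A S (Δ x)) = piR K A Δ ε x
  antipode_c : ∀ x : A,
    LinearMap.mul' K A (TensorProduct.map S (LinearMap.mul' K A ∘ₗ LinearMap.lTensor A S)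
      (LinearMap.lTensor A Δ (Δ x))) = S x

section Aux

open TensorProduct

variable {K : Type*} [Field K] {A : Type*} [Ring A] [Algebra K A]
  (Δ : A →ₗ[K] A ⊗[K] A) (ε : A →ₗ[K] K)

lemma eps_mul_piL (hA : WeakBialgebra K A Δ ε) (a y : A) :
    ε (a * piL K A Δ ε y) = ε (a * y) := by
  have h := hA.weak_counit_b a 1 y
  rw [mul_one] at h
  rw [h]
  simp only [piL, LinearMap.coe_comp, LinearEquiv.coe_coe, Function.comp_apply,
    LinearMap.flip_apply, TensorProduct.mk_apply, LinearMap.mulLeft_apply]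
  induction Δ 1 using TensorProduct.induction_on with
  | zero => simp
  | tmul p q => simp [Algebra.TensorProduct.tmul_mul_tmul, mul_comm]
  | add s t hs ht => simp only [add_mul, map_add, mul_add, hs, ht]

lemma eps_piR_mul (hA : WeakBialgebra K A Δ ε) (x b : A) :
    ε (piR K A Δ ε x * b) = ε (x * b) := by
  have h := hA.weak_counit_b x 1 b
  rw [mul_one] at h
  rw [h]
  simp only [piR, LinearMap.coe_comp, LinearEquiv.coe_coe, Function.comp_apply,
    TensorProduct.mk_apply, LinearMap.mulRight_apply]
  induction Δ 1 using TensorProduct.induction_on with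
  | zero => simp
  | tmul p q => simp [Algebra.TensorProduct.tmul_mul_tmul, mul_comm]
  | add s t hs ht => simp only [mul_add, map_add, add_mul, hs, ht]

lemma piL_congr {z w : A} (h : ∀ a, ε (a * z) = ε (a * w)) :
    piL K A Δ ε z = piL K A Δ ε w := by
  simp only [piL, LinearMap.coe_comp, LinearEquiv.coe_coe, Function.comp_apply,
    LinearMap.flip_apply, TensorProduct.mk_apply, LinearMap.mulLeft_apply]
  induction Δ 1 using TensorProduct.induction_on with
  | zero => simp
  | tmul p q => simp [Algebra.TensorProduct.tmul_mul_tmul, h p]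
  | add s t hs ht => simp only [add_mul, map_add, hs, ht]

lemma piR_congr {z w : A} (h : ∀ b, ε (z * b) = ε (w * b)) :
    piR K A Δ ε z = piR K A Δ ε w := by
  simp only [piR, LinearMap.coe_comp, LinearEquiv.coe_coe, Function.comp_apply,
    TensorProduct.mk_apply, LinearMap.mulRight_apply]
  induction Δ 1 using TensorProduct.induction_on with
  | zero => simp
  | tmul p q => simp [Algebra.TensorProduct.tmul_mul_tmul, h q]
  | add s t hs ht => simp only [mul_add, map_add, hs, ht]

end Aux

/-- In a weak bialgebra `A` over a field `K`, the bilinear form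
`A^R × A^L → K`, `(y^R, x^L) ↦ ε(y^R x^L)` is nondegenerate; consequently `A^L` and
`A^R` are isomorphic as `K`-vector spaces and have equal finite dimension. -/
theorem weakBialgebra_counit_pairing_nondegenerate
    (K : Type*) [Field K] (A : Type*) [Ring A] [Algebra K A] [FiniteDimensional K A]
    (Δ : A →ₗ[K] A ⊗[K] A) (ε : A →ₗ[K] K) (hA : WeakBialgebra K A Δ ε) :
    (∀ xL ∈ LinearMap.range (piL K A Δ ε),
      (∀ yR ∈ LinearMap.range (piR K A Δ ε), ε (yR * xL) = 0) → xL = 0) ∧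
    (∀ yR ∈ LinearMap.range (piR K A Δ ε),
      (∀ xL ∈ LinearMap.range (piL K A Δ ε), ε (yR * xL) = 0) → yR = 0) ∧
    Nonempty ((LinearMap.range (piL K A Δ ε)) ≃ₗ[K] (LinearMap.range (piR K A Δ ε))) ∧
    Module.finrank K (LinearMap.range (piL K A Δ ε)) =
      Module.finrank K (LinearMap.range (piR K A Δ ε)) := by
  have part1 : ∀ xL ∈ LinearMap.range (piL K A Δ ε),
      (∀ yR ∈ LinearMap.range (piR K A Δ ε), ε (yR * xL) = 0) → xL = 0 := by
    rintro xL ⟨x, hx⟩ hyp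
    have h0 : ∀ a, ε (a * xL) = 0 := fun a => by
      rw [← eps_piR_mul Δ ε hA]; exact hyp _ ⟨a, rfl⟩
    have h1 : ∀ a, ε (a * x) = ε (a * xL) := fun a => by
      rw [← hx, eps_mul_piL Δ ε hA]
    calc xL = piL K A Δ ε x := hx.symm
      _ = piL K A Δ ε xL := piL_congr Δ ε h1
      _ = piL K A Δ ε 0 := piL_congr Δ ε (fun a => by simp [h0 a])
      _ = 0 := map_zero _
  have part2 : ∀ yR ∈ LinearMap.range (piR K A Δ ε),
      (∀ xL ∈ LinearMap.range (piL K A Δ ε), ε (yR * xL) = 0) → yR = 0 := by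
    rintro yR ⟨y, hy⟩ hyp
    have h0 : ∀ b, ε (yR * b) = 0 := fun b => by
      rw [← eps_mul_piL Δ ε hA]; exact hyp _ ⟨b, rfl⟩
    have h1 : ∀ b, ε (y * b) = ε (yR * b) := fun b => by
      rw [← hy, eps_piR_mul Δ ε hA]
    calc yR = piR K A Δ ε y := hy.symm
      _ = piR K A Δ ε yR := piR_congr Δ ε h1
      _ = piR K A Δ ε 0 := piR_congr Δ ε (fun b => by simp [h0 b])
      _ = 0 := map_zero _
  set L := LinearMap.range (piL K A Δ ε) with hL
  set R := LinearMap.range (piR K A Δ ε) with hR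
  let B : ↥R →ₗ[K] ↥L →ₗ[K] K :=
    ((LinearMap.mul K A).compr₂ ε).compl₁₂ R.subtype L.subtype
  have hBval : ∀ (r : R) (l : L), B r l = ε ((r : A) * (l : A)) := fun r l => rfl
  have hinj1 : Function.Injective B.flip := by
    rw [← LinearMap.ker_eq_bot]
    refine (Submodule.eq_bot_iff _).mpr fun l hl => ?_
    have : ∀ r : R, ε ((r : A) * (l : A)) = 0 := fun r => by
      have := congrFun (congrArg DFunLike.coe hl) r
      simpa [hBval] using this
    exact Subtype.ext (part1 l l.2 (fun yR hyR => this ⟨yR, hyR⟩))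
  have hinj2 : Function.Injective B := by
    rw [← LinearMap.ker_eq_bot]
    refine (Submodule.eq_bot_iff _).mpr fun r hr => ?_
    have : ∀ l : L, ε ((r : A) * (l : A)) = 0 := fun l => by
      have := congrFun (congrArg DFunLike.coe hr) l
      simpa [hBval] using this
    exact Subtype.ext (part2 r r.2 (fun xL hxL => this ⟨xL, hxL⟩))
  have e1 : Module.finrank K ↥L ≤ Module.finrank K ↥R :=
    (LinearMap.finrank_le_finrank_of_injective hinj1).trans_eq Subspace.dual_finrank_eq
  have e2 : Module.finrank K ↥R ≤ Module.finrank K ↥L :=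
    (LinearMap.finrank_le_finrank_of_injective hinj2).trans_eq Subspace.dual_finrank_eq
  have hrank : Module.finrank K ↥L = Module.finrank K ↥R := le_antisymm e1 e2
  exact ⟨part1, part2, ⟨LinearEquiv.ofFinrankEq _ _ hrank⟩, hrank⟩
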